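/- Let $\sigma > 0$, and let $m, p$ be positive integers. Define $\mu_p^{(m)} = \sum_{i_1+\cdots+i_m = p} \binom{p}{i_1}\cdots\binom{p}{i_m} \exp\left(\frac{\sigma^2 \sum_{j=1}^m i_j^2}{2}\right)$, where the sum is over nonnegative integer tuples summing to $p$. Then $\binom{mp}{p}\exp\left(\frac{\sigma^2 p^2}{2m}\right) \le \mu_p^{(m)} \le \binom{mp}{p}\exp\left(\frac{\sigma^2 p^2}{2}\right)$. -/

import Mathlib

open Finset Finset.Nat

/-- Sum over `antidiagonalTuple (k+1) n` decomposes via `Fin.cons`. -/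
lemma sum_antidiagonalTuple_succ {M : Type*} [AddCommMonoid M] (k n : ℕ)
    (g : (Fin (k + 1) → ℕ) → M) :
    ∑ f ∈ antidiagonalTuple (k + 1) n, g f =
      ∑ ij ∈ antidiagonal n, ∑ x ∈ antidiagonalTuple k ij.2, g (Fin.cons ij.1 x) := by
  rw [Finset.sum_sigma']
  refine Finset.sum_nbij' (fun f => ⟨(f 0, ∑ j, Fin.tail f j), Fin.tail f⟩)
    (fun q => Fin.cons q.1.1 q.2) ?_ ?_ ?_ ?_ ?_
  · intro f hf
    rw [mem_antidiagonalTuple] at hf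
    refine Finset.mem_sigma.mpr ⟨?_, mem_antidiagonalTuple.mpr rfl⟩
    rw [Finset.HasAntidiagonal.mem_antidiagonal, ← hf, Fin.sum_univ_succ]
    rfl
  · intro q hq
    rw [Finset.mem_sigma, Finset.HasAntidiagonal.mem_antidiagonal] at hq
    have h2 := mem_antidiagonalTuple.mp hq.2
    rw [mem_antidiagonalTuple, Fin.sum_univ_succ]
    simp only [Fin.cons_zero, Fin.cons_succ]
    rw [h2, hq.1]
  · intro f _
    exact Fin.cons_self_tail f
  · intro q hq
    rw [Finset.mem_sigma, Finset.HasAntidiagonal.mem_antidiagonal] at hq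
    have h2 := mem_antidiagonalTuple.mp hq.2
    obtain ⟨⟨a, b⟩, x⟩ := q
    refine Sigma.ext ?_ ?_
    · simp only [Fin.cons_zero, Fin.tail_cons]
      simp only at h2
      rw [h2]
    · simp [Fin.tail_cons]
  · intro f _
    simp only
    rw [Fin.cons_self_tail]

/-- Generalized Vandermonde identity over antidiagonal tuples. -/
lemma sum_prod_choose (p : ℕ) : ∀ m n : ℕ,
    ∑ f ∈ antidiagonalTuple m n, ∏ j : Fin m, p.choose (f j) = (m * p).choose n := by
  intro m
  induction m with
  | zero =>
    intro n
    cases n with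
    | zero => simp
    | succ n => simp
  | succ k ih =>
    intro n
    rw [sum_antidiagonalTuple_succ k n (fun f => ∏ j : Fin (k + 1), p.choose (f j))]
    have : ∀ ij ∈ antidiagonal n,
        (∑ x ∈ antidiagonalTuple k ij.2, ∏ j : Fin (k + 1), p.choose ((Fin.cons ij.1 x : Fin (k+1) → ℕ) j))
          = p.choose ij.1 * (k * p).choose ij.2 := by
      intro ij _
      rw [← ih ij.2, Finset.mul_sum]
      refine Finset.sum_congr rfl fun x _ => ?_
      rw [Fin.prod_univ_succ, Fin.cons_zero]
      simp [Fin.cons_succ]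
    rw [Finset.sum_congr rfl this, ← Nat.add_choose_eq]
    congr 1
    ring

/-- Bounds on the expected `p`-th spectral moment for iid log-normal symbol coefficients. -/
theorem moment_bounds (σ : ℝ) (hσ : 0 < σ) (m p : ℕ) (hm : 0 < m) (hp : 0 < p) :
    (((m * p).choose p : ℝ)) * Real.exp (σ ^ 2 * (p : ℝ) ^ 2 / (2 * m)) ≤
      (∑ f ∈ Finset.Nat.antidiagonalTuple m p,
        (∏ j : Fin m, (p.choose (f j) : ℝ)) *
          Real.exp (σ ^ 2 * (∑ j : Fin m, ((f j : ℝ)) ^ 2) / 2)) ∧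
    (∑ f ∈ Finset.Nat.antidiagonalTuple m p,
        (∏ j : Fin m, (p.choose (f j) : ℝ)) *
          Real.exp (σ ^ 2 * (∑ j : Fin m, ((f j : ℝ)) ^ 2) / 2)) ≤
      (((m * p).choose p : ℝ)) * Real.exp (σ ^ 2 * (p : ℝ) ^ 2 / 2) := by
  have hchoose : ∑ f ∈ antidiagonalTuple m p, ∏ j : Fin m, (p.choose (f j) : ℝ)
      = ((m * p).choose p : ℝ) := by
    rw [← sum_prod_choose p m p]
    push_cast
    rfl
  have hprodnn : ∀ f : Fin m → ℕ, (0:ℝ) ≤ ∏ j : Fin m, (p.choose (f j) : ℝ) := by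
    intro f
    exact Finset.prod_nonneg fun j _ => Nat.cast_nonneg _
  -- bounds on the squared sums
  have hsum : ∀ f ∈ antidiagonalTuple m p, (∑ j : Fin m, ((f j : ℝ))) = (p : ℝ) := by
    intro f hf
    have := mem_antidiagonalTuple.mp hf
    rw [← this]
    push_cast
    rfl
  have hupper : ∀ f ∈ antidiagonalTuple m p,
      (∑ j : Fin m, ((f j : ℝ)) ^ 2) ≤ (p : ℝ) ^ 2 := by
    intro f hf
    rw [← hsum f hf]
    exact Finset.sum_sq_le_sq_sum_of_nonneg fun j _ => Nat.cast_nonneg _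
  have hlower : ∀ f ∈ antidiagonalTuple m p,
      (p : ℝ) ^ 2 / m ≤ (∑ j : Fin m, ((f j : ℝ)) ^ 2) := by
    intro f hf
    rw [div_le_iff₀ (by exact_mod_cast hm)]
    have := sq_sum_le_card_mul_sum_sq (s := Finset.univ) (f := fun j : Fin m => ((f j : ℕ) : ℝ))
    rw [hsum f hf] at this
    simpa [mul_comm] using this
  constructor
  · rw [← hchoose, Finset.sum_mul]
    refine Finset.sum_le_sum fun f hf => ?_
    refine mul_le_mul_of_nonneg_left ?_ (hprodnn f)
    apply Real.exp_le_exp.mpr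
    rw [div_le_div_iff₀ (by positivity) (by norm_num)]
    have hm' : (0:ℝ) < m := by exact_mod_cast hm
    have h := hlower f hf
    rw [div_le_iff₀ hm'] at h
    nlinarith [mul_le_mul_of_nonneg_left h (sq_nonneg σ)]
  · rw [← hchoose, Finset.sum_mul]
    refine Finset.sum_le_sum fun f hf => ?_
    refine mul_le_mul_of_nonneg_left ?_ (hprodnn f)
    apply Real.exp_le_exp.mpr
    have := hupper f hf
    have : σ ^ 2 * (∑ j : Fin m, ((f j : ℝ)) ^ 2) ≤ σ ^ 2 * (p:ℝ) ^ 2 :=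
      mul_le_mul_of_nonneg_left this (sq_nonneg σ)
    linarith
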